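/- Let $t\in(0,1)$ and $x^+\in\ell^1_{\bar r}$. Suppose there is $K>0$ such that $\|x^+\|_{\bar r,1}-\|x\|_{\bar r,1} \le K\|x^+-x\|_{\bar a,2}^{(2-2t)/(2-t)}$ for all sequences $x$ with $|x_j|\le|x^+_j|$ for all $j$. Then $\|x^+\|_{k_t}\le K^{(2-t)/t}$. -/

import Mathlib

open scoped ENNReal
noncomputable section

variable {Λ : Type*}

/-- Weighted `ℓ^p` quasi-norm (value in `ℝ≥0∞`). -/
def wnorm (ω : Λ → ℝ) (p : ℝ) (x : Λ → ℝ) : ℝ≥0∞ :=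
  (∑' j, ENNReal.ofReal (ω j ^ p * |x j| ^ p)) ^ (1 / p)

/-- The interpolating weights `(ω_t)_j = (a_j^{2t-2} r_j^{2-t})^{1/t}`. -/
def omegaWeight (a r : Λ → ℝ) (t : ℝ) : Λ → ℝ :=
  fun j => (a j ^ (2 * t - 2) * r j ^ (2 - t)) ^ (1 / t)

/-- Weighted `ℓ¹` norm `‖x‖_{r,1} = ∑ r_j |x_j|`. -/
def rnorm1 (r : Λ → ℝ) (x : Λ → ℝ) : ℝ≥0∞ := ∑' j, ENNReal.ofReal (r j * |x j|)

/-- Weighted `ℓ²` norm `‖x‖_{a,2} = (∑ a_j² x_j²)^{1/2}`. -/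
def anorm2 (a : Λ → ℝ) (x : Λ → ℝ) : ℝ≥0∞ :=
  (∑' j, ENNReal.ofReal (a j ^ 2 * x j ^ 2)) ^ ((1 : ℝ) / 2)

/-- The sum `∑_j a_j⁻² r_j² 𝟙_{a_j⁻² r_j α < |x_j|}`. -/
def kSum (a r : Λ → ℝ) (α : ℝ) (x : Λ → ℝ) : ℝ≥0∞ :=
  ∑' j, ENNReal.ofReal (if r j * α / a j ^ 2 < |x j| then r j ^ 2 / a j ^ 2 else 0)

/-- The weak quasi-norm `‖x‖_{k_t} = sup_{α>0} α (kSum α x)^{1/t}`. -/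
def knorm (a r : Λ → ℝ) (t : ℝ) (x : Λ → ℝ) : ℝ≥0∞ :=
  ⨆ α ∈ Set.Ioi (0 : ℝ), ENNReal.ofReal α * (kSum a r α x) ^ (1 / t)

/-- Hard thresholding operator. -/
def Tthresh (a r : Λ → ℝ) (α : ℝ) (x : Λ → ℝ) : Λ → ℝ :=
  fun j => if r j * α / a j ^ 2 < |x j| then x j else 0

lemma aux8 (a r : Λ → ℝ) (ha : ∀ j, 0 < a j) (hr : ∀ j, 0 < r j)
    (t : ℝ) (ht0 : 0 < t) (ht1 : t < 1)
    (xplus : Λ → ℝ) (hx1 : Summable fun j => r j * |xplus j|)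
    (K : ℝ) (hK : 0 < K)
    (hvsc : ∀ x : Λ → ℝ, (∀ j, |x j| ≤ |xplus j|) →
      ENNReal.ofReal ((∑' j, r j * |xplus j|) - ∑' j, r j * |x j|) ≤
        ENNReal.ofReal K * anorm2 a (xplus - x) ^ ((2 - 2 * t) / (2 - t)))
    (α lam : ℝ) (hα : 0 < α) (hlam : 0 < lam) :
    kSum a r ((1 + lam) * α) xplus ≤ ENNReal.ofReal (K ^ (2 - t) * (lam * α) ^ (-t)) := by
  have h2t : (0:ℝ) < 2 - t := by linarith
  set γ : ℝ := (1 - t) / (2 - t) with hγ_def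
  have hγ0 : 0 < γ := div_pos (by linarith) h2t
  have hγ1 : γ < 1 := by
    rw [div_lt_one h2t]; linarith
  set c : Λ → ℝ := fun j => r j * α / a j ^ 2 with hc_def
  have hc : ∀ j, 0 < c j := fun j => div_pos (mul_pos (hr j) hα) (pow_pos (ha j) 2)
  set δ : Λ → ℝ := fun j => if c j < |xplus j| then min (|xplus j| - c j) (lam * c j) else 0
    with hδ_def
  set x : Λ → ℝ := fun j => (1 - δ j / |xplus j|) * xplus j with hx_def
  have hδ0 : ∀ j, 0 ≤ δ j := by
    intro j
    by_cases h : c j < |xplus j|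
    · simp only [hδ_def, if_pos h]
      exact le_min (by linarith) (mul_nonneg hlam.le (hc j).le)
    · simp [hδ_def, if_neg h]
  have hδc : ∀ j, δ j ≤ lam * c j := by
    intro j
    by_cases h : c j < |xplus j|
    · simp only [hδ_def, if_pos h]; exact min_le_right _ _
    · simp only [hδ_def, if_neg h]; exact mul_nonneg hlam.le (hc j).le
  have hδabs : ∀ j, δ j ≤ |xplus j| := by
    intro j
    by_cases h : c j < |xplus j|
    · simp only [hδ_def, if_pos h]
      exact (min_le_left _ _).trans (by linarith [(hc j).le])
    · simp only [hδ_def, if_neg h]; exact abs_nonneg _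
  have hzero : ∀ j, xplus j = 0 → δ j = 0 := by
    intro j h0
    simp only [hδ_def]
    rw [if_neg]
    rw [h0, abs_zero]
    exact not_lt.2 (hc j).le
  have habs : ∀ j, |x j| = |xplus j| - δ j := by
    intro j
    by_cases h0 : xplus j = 0
    · simp [hx_def, h0, hzero j h0]
    · have hx0 : 0 < |xplus j| := abs_pos.2 h0
      have h2 : 0 ≤ 1 - δ j / |xplus j| :=
        sub_nonneg.2 ((div_le_one hx0).2 (hδabs j))
      simp only [hx_def]
      rw [abs_mul, abs_of_nonneg h2, sub_mul, one_mul, div_mul_cancel₀ _ hx0.ne']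
  have hdiff : ∀ j, |xplus j - x j| = δ j := by
    intro j
    by_cases h0 : xplus j = 0
    · simp [hx_def, h0, hzero j h0]
    · have hx0 : 0 < |xplus j| := abs_pos.2 h0
      have h1 : xplus j - x j = (δ j / |xplus j|) * xplus j := by
        simp only [hx_def]; ring
      rw [h1, abs_mul, abs_div, abs_abs, abs_of_nonneg (hδ0 j),
        div_mul_cancel₀ _ hx0.ne']
  have hxle : ∀ j, |x j| ≤ |xplus j| := fun j => by
    rw [habs j]; linarith [hδ0 j]
  have hsum_x : Summable fun j => r j * |x j| :=
    hx1.of_nonneg_of_le (fun j => mul_nonneg (hr j).le (abs_nonneg _))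
      (fun j => mul_le_mul_of_nonneg_left (hxle j) (hr j).le)
  have hsum_δ : Summable fun j => r j * δ j :=
    hx1.of_nonneg_of_le (fun j => mul_nonneg (hr j).le (hδ0 j))
      (fun j => mul_le_mul_of_nonneg_left (hδabs j) (hr j).le)
  set L : ℝ := ∑' j, r j * δ j with hL_def
  have hL0 : 0 ≤ L := tsum_nonneg fun j => mul_nonneg (hr j).le (hδ0 j)
  have hA : (∑' j, r j * |xplus j|) - (∑' j, r j * |x j|) = L := by
    rw [← Summable.tsum_sub hx1 hsum_x]
    exact tsum_congr fun j => by rw [habs j]; ring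
  -- Step B : anorm2 bound
  have hB : anorm2 a (xplus - x) ≤ (ENNReal.ofReal (lam * α * L)) ^ ((1:ℝ)/2) := by
    unfold anorm2
    refine ENNReal.rpow_le_rpow ?_ (by norm_num)
    have hterm : ∀ j, a j ^ 2 * ((xplus - x) j) ^ 2 ≤ lam * α * (r j * δ j) := by
      intro j
      have h1 : ((xplus - x) j) ^ 2 = δ j ^ 2 := by
        rw [← sq_abs]; simp only [Pi.sub_apply]; rw [hdiff j]
      rw [h1]
      have h2 : δ j ^ 2 ≤ (lam * c j) * δ j := by nlinarith [hδ0 j, hδc j]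
      have h3 : a j ^ 2 * δ j ^ 2 ≤ a j ^ 2 * ((lam * c j) * δ j) :=
        mul_le_mul_of_nonneg_left h2 (by positivity)
      refine h3.trans_eq ?_
      simp only [hc_def]
      field_simp [(ha j).ne']
    calc (∑' j, ENNReal.ofReal (a j ^ 2 * ((xplus - x) j) ^ 2))
        ≤ ∑' j, ENNReal.ofReal (lam * α * (r j * δ j)) :=
          Summable.tsum_le_tsum (fun j => ENNReal.ofReal_le_ofReal (hterm j))
            ENNReal.summable ENNReal.summable
      _ = ENNReal.ofReal (lam * α * L) := by
          rw [← ENNReal.ofReal_tsum_of_nonneg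
            (fun j => mul_nonneg (mul_pos hlam hα).le
              (mul_nonneg (hr j).le (hδ0 j))) (hsum_δ.mul_left _)]
          rw [tsum_mul_left]
  -- Use the hypothesis
  have hmain := hvsc x hxle
  rw [hA] at hmain
  have he0 : (0:ℝ) ≤ (2 - 2*t) / (2 - t) := div_nonneg (by linarith) h2t.le
  have hB2 : anorm2 a (xplus - x) ^ ((2 - 2*t)/(2-t)) ≤
      ENNReal.ofReal ((lam * α * L) ^ γ) := by
    calc anorm2 a (xplus - x) ^ ((2 - 2*t)/(2-t))
        ≤ ((ENNReal.ofReal (lam * α * L)) ^ ((1:ℝ)/2)) ^ ((2 - 2*t)/(2-t)) :=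
          ENNReal.rpow_le_rpow hB he0
      _ = (ENNReal.ofReal (lam * α * L)) ^ γ := by
          rw [← ENNReal.rpow_mul]
          congr 1
          rw [hγ_def]
          field_simp
      _ = ENNReal.ofReal ((lam * α * L) ^ γ) :=
          ENNReal.ofReal_rpow_of_nonneg
            (mul_nonneg (mul_pos hlam hα).le hL0) hγ0.le
  have hreal : L ≤ K * (lam * α * L) ^ γ := by
    have := hmain.trans (mul_le_mul_right hB2 _)
    rw [← ENNReal.ofReal_mul hK.le] at this
    exact (ENNReal.ofReal_le_ofReal_iff
      (mul_nonneg hK.le (Real.rpow_nonneg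
        (mul_nonneg (mul_pos hlam hα).le hL0) _))).1 this
  -- Derive L ≤ K^(2-t) * (lam*α)^(1-t)
  set s : ℝ := lam * α with hs_def
  have hs : 0 < s := mul_pos hlam hα
  have hL2 : L ≤ K ^ (2 - t) * s ^ (1 - t) := by
    rcases hL0.eq_or_lt with h | hLpos
    · rw [← h]
      exact mul_nonneg (Real.rpow_nonneg hK.le _) (Real.rpow_nonneg hs.le _)
    · have h1 : L ^ (1 - γ) ≤ K * s ^ γ := by
        have hLγ : 0 < L ^ γ := Real.rpow_pos_of_pos hLpos _
        rw [Real.rpow_sub hLpos, Real.rpow_one, div_le_iff₀ hLγ]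
        calc L ≤ K * (s * L) ^ γ := hreal
          _ = K * s ^ γ * L ^ γ := by
              rw [Real.mul_rpow hs.le hLpos.le]; ring
      have h2 : (L ^ (1 - γ)) ^ (2 - t) ≤ (K * s ^ γ) ^ (2 - t) :=
        Real.rpow_le_rpow (by positivity) h1 h2t.le
      have hm2 : γ * (2 - t) = 1 - t := by
        rw [hγ_def]; exact div_mul_cancel₀ _ h2t.ne'
      have hm1 : (1 - γ) * (2 - t) = 1 := by
        rw [sub_mul, one_mul, hm2]; ring
      have h3 : (L ^ (1 - γ)) ^ (2 - t) = L := by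
        rw [← Real.rpow_mul hLpos.le, hm1, Real.rpow_one]
      have h4 : (K * s ^ γ) ^ (2 - t) = K ^ (2 - t) * s ^ (1 - t) := by
        rw [Real.mul_rpow hK.le (Real.rpow_nonneg hs.le _),
          ← Real.rpow_mul hs.le, hm2]
      rw [h3, h4] at h2
      exact h2
  -- Step C : kSum bound
  have hC : kSum a r ((1 + lam) * α) xplus ≤ ENNReal.ofReal (L / s) := by
    unfold kSum
    have hterm : ∀ j,
        (if r j * ((1 + lam) * α) / a j ^ 2 < |xplus j| then r j ^ 2 / a j ^ 2 else 0)
          ≤ r j * δ j / s := by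
      intro j
      by_cases h : r j * ((1 + lam) * α) / a j ^ 2 < |xplus j|
      · rw [if_pos h]
        have hthr : r j * ((1 + lam) * α) / a j ^ 2 = (1 + lam) * c j := by
          simp only [hc_def]; ring
        rw [hthr] at h
        have hcj : c j < |xplus j| := by nlinarith [hc j, (hc j).le]
        have hmin : lam * c j ≤ |xplus j| - c j := by nlinarith [hc j]
        have hδeq : δ j = lam * c j := by
          simp only [hδ_def, if_pos hcj]
          exact min_eq_right hmin
        rw [hδeq]
        refine le_of_eq ?_
        simp only [hc_def, hs_def]
        field_simp [(ha j).ne', hlam.ne', hα.ne']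
      · rw [if_neg h]
        exact div_nonneg (mul_nonneg (hr j).le (hδ0 j)) hs.le
    calc (∑' j, ENNReal.ofReal
          (if r j * ((1 + lam) * α) / a j ^ 2 < |xplus j| then r j ^ 2 / a j ^ 2 else 0))
        ≤ ∑' j, ENNReal.ofReal (r j * δ j / s) :=
          Summable.tsum_le_tsum (fun j => ENNReal.ofReal_le_ofReal (hterm j))
            ENNReal.summable ENNReal.summable
      _ = ENNReal.ofReal (L / s) := by
          rw [← ENNReal.ofReal_tsum_of_nonneg
            (fun j => div_nonneg (mul_nonneg (hr j).le (hδ0 j)) hs.le)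
            (hsum_δ.div_const _)]
          rw [tsum_div_const]
  refine hC.trans (ENNReal.ofReal_le_ofReal ?_)
  rw [div_le_iff₀ hs]
  calc L ≤ K ^ (2 - t) * s ^ (1 - t) := hL2
    _ = K ^ (2 - t) * s ^ (-t) * s := by
        rw [mul_assoc]
        congr 1
        rw [← Real.rpow_add_one hs.ne']
        congr 1
        ring

theorem stmt8 (a r : Λ → ℝ) (ha : ∀ j, 0 < a j) (hr : ∀ j, 0 < r j)
    (t : ℝ) (ht : t ∈ Set.Ioo (0:ℝ) 1)
    (xplus : Λ → ℝ) (hx1 : Summable fun j => r j * |xplus j|)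
    (K : ℝ) (hK : 0 < K)
    (hvsc : ∀ x : Λ → ℝ, (∀ j, |x j| ≤ |xplus j|) →
      ENNReal.ofReal ((∑' j, r j * |xplus j|) - ∑' j, r j * |x j|) ≤
        ENNReal.ofReal K * anorm2 a (xplus - x) ^ ((2 - 2 * t) / (2 - t))) :
    knorm a r t xplus ≤ ENNReal.ofReal (K ^ ((2 - t) / t)) := by
  obtain ⟨ht0, ht1⟩ := ht
  have key : ∀ β : ℝ, 0 < β →
      kSum a r β xplus ≤ ENNReal.ofReal (K ^ (2 - t) * β ^ (-t)) := by
    intro β hβ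
    have h2 : ∀ cc : ℝ, 1 < cc →
        kSum a r β xplus ≤ ENNReal.ofReal (K ^ (2 - t) * β ^ (-t) * cc) := by
      intro cc hcc
      have hcc0 : (0:ℝ) < cc := by linarith
      have h1t : (1:ℝ) < cc ^ (1/t) :=
        (Real.one_lt_rpow_iff_of_pos hcc0).2 (Or.inl ⟨hcc, by positivity⟩)
      set lam : ℝ := (cc ^ (1/t) - 1)⁻¹ with hlam_def
      have hlam : 0 < lam := inv_pos.2 (by linarith)
      set α : ℝ := β / (1 + lam) with hα_def
      have h1lam : (0:ℝ) < 1 + lam := by linarith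
      have hα : 0 < α := div_pos hβ h1lam
      have hβeq : β = (1 + lam) * α := by
        rw [hα_def, mul_div_cancel₀ _ h1lam.ne']
      have haux := aux8 a r ha hr t ht0 ht1 xplus hx1 K hK hvsc α lam hα hlam
      rw [← hβeq] at haux
      refine haux.trans (le_of_eq ?_)
      congr 1
      -- (lam * α) ^ (-t) = β ^ (-t) * cc
      have hu0 : cc ^ (1/t) ≠ 0 := by positivity
      have hu1 : cc ^ (1/t) - 1 ≠ 0 := by linarith
      have hlamα : lam * α = β * cc ^ (-(1/t)) := by
        rw [Real.rpow_neg hcc0.le, hα_def, hlam_def]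
        field_simp
        rw [sub_add_cancel, div_self hu0]
      have hmul : (-(1/t)) * (-t) = 1 := by field_simp
      rw [hlamα, Real.mul_rpow hβ.le (Real.rpow_nonneg hcc0.le _),
        ← Real.rpow_mul hcc0.le, hmul, Real.rpow_one, mul_assoc]
    have hlim : Filter.Tendsto
        (fun cc : ℝ => ENNReal.ofReal (K ^ (2 - t) * β ^ (-t) * cc))
        (nhdsWithin 1 (Set.Ioi 1)) (nhds (ENNReal.ofReal (K ^ (2 - t) * β ^ (-t)))) := by
      have h1 : Filter.Tendsto (fun cc : ℝ => K ^ (2 - t) * β ^ (-t) * cc)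
          (nhds 1) (nhds (K ^ (2 - t) * β ^ (-t))) := by
        have : Continuous (fun cc : ℝ => K ^ (2 - t) * β ^ (-t) * cc) :=
          continuous_const.mul continuous_id
        simpa using this.tendsto (1:ℝ)
      exact (ENNReal.continuous_ofReal.tendsto _).comp (h1.mono_left nhdsWithin_le_nhds)
    exact ge_of_tendsto hlim
      (Filter.eventually_of_mem self_mem_nhdsWithin fun cc hcc => h2 cc hcc)
  rw [knorm]
  refine iSup₂_le fun β hβ => ?_
  rw [Set.mem_Ioi] at hβ
  have hk := key β hβ
  have h1t : (0:ℝ) ≤ 1 / t := by positivity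
  calc ENNReal.ofReal β * kSum a r β xplus ^ (1 / t)
      ≤ ENNReal.ofReal β * (ENNReal.ofReal (K ^ (2 - t) * β ^ (-t))) ^ (1 / t) :=
        mul_le_mul_right (ENNReal.rpow_le_rpow hk h1t) _
    _ = ENNReal.ofReal (K ^ ((2 - t) / t)) := by
        rw [ENNReal.ofReal_rpow_of_nonneg
          (mul_nonneg (Real.rpow_nonneg hK.le _) (Real.rpow_nonneg hβ.le _)) h1t]
        rw [← ENNReal.ofReal_mul hβ.le]
        congr 1
        rw [Real.mul_rpow (Real.rpow_nonneg hK.le _) (Real.rpow_nonneg hβ.le _),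
          ← Real.rpow_mul hK.le, ← Real.rpow_mul hβ.le]
        have h1 : (2 - t) * (1/t) = (2 - t)/t := by ring
        have h2 : (-t) * (1/t) = -1 := by field_simp
        rw [h1, h2, Real.rpow_neg_one]
        field_simp
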